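/- Let b be a prime, s ≥ 1, and m, n ∈ ℕ with 1 ≤ m ≤ n. Let p ∈ ℤ_b[x] with deg(p) = n and 𝐪 = (q_1,…,q_s) ∈ (ℤ_b[x])^s with deg(q_j) < n for all j. Then the dual net of the higher order polynomial lattice point set 𝒫(p,𝐪) is 𝒫^⊥(p,𝐪) = {𝐤 = (k_1,…,k_s) ∈ ℕ^s : there exists a ∈ ℤ_b[x] with deg(a) < n − m such that tr_n(k_1) q_1 + ⋯ + tr_n(k_s) q_s ≡ a (mod p)}; equivalently, 𝐤 ∈ 𝒫^⊥(p,𝐪) iff the remainder of tr_n(k_1)q_1 + ⋯ + tr_n(k_s)q_s upon division by p has degree < n − m. -/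

import Mathlib

open MeasureTheory

noncomputable section

/-- the `i`-th `b`-adic digit of the natural number `k`. -/
def bdig (b k i : ℕ) : ℕ := k / b ^ i % b

/-- the `k`-th `b`-adic character `χ_k` on `G = ∏_{i ≥ 1} ℤ_b`,
`χ_k(z) = ω_b^{κ_0 ζ_1 + κ_1 ζ_2 + ⋯}` where `ω_b = exp(2π√-1/b)`. -/
def gchar (b k : ℕ) (z : ℕ → ZMod b) : ℂ :=
  Complex.exp (2 * Real.pi * Complex.I / b) ^ ∑ i ∈ Finset.range k, bdig b k i * (z i).val

/-- the `𝐤`-th character on `G^s`, `χ_𝐤(𝐳) = ∏_j χ_{k_j}(z_j)`. -/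
def gcharV (b : ℕ) {s : ℕ} (k : Fin s → ℕ) (z : Fin s → ℕ → ZMod b) : ℂ :=
  ∏ j, gchar b (k j) (z j)

/-- the projection map `π : G → [0,1]`, `π(z) = ∑_{i ≥ 1} ζ_i b^{-i}`. -/
def gproj (b : ℕ) (z : ℕ → ZMod b) : ℝ := ∑' i, (z i).val / (b : ℝ) ^ (i + 1)

/-- the section map `σ : [0,1] → G`, sending `x` to its sequence of `b`-adic digits
(`ξ_i = ⌊b^i x⌋ mod b` for `x < 1`, and all digits `b - 1` for `x = 1`). -/
def gsect (b : ℕ) (x : ℝ) : ℕ → ZMod b := fun i =>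
  if x < 1 then ((⌊(b : ℝ) ^ (i + 1) * x⌋ : ℤ) : ZMod b) else -1

/-- the equi-probability (uniform) measure on `ZMod b`. -/
def unifZMod (b : ℕ) : Measure (ZMod b) := (b : ENNReal)⁻¹ • Measure.count

/-- `μ` is the product probability measure `μ̃` on `G = ∏_{i ≥ 1} ℤ_b` induced by the
uniform measure on `ℤ_b`, characterized as the projective limit of the finite products
of the uniform measure on `ZMod b`. -/
def IsProductUniform (b : ℕ) (μ : Measure (ℕ → ZMod b)) : Prop :=
  IsProjectiveLimit μ (fun J : Finset ℕ => Measure.pi (fun _ : J => unifZMod b))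

/-- the `h`-th point `𝐳_h` of the digital net over `ℤ_b` in `G^s` with generating
matrices `C j : ℕ → Fin m → ZMod b` (`h` with `b`-adic digits `η_0, …, η_{m-1}`,
`z_{h,j}ᵀ = C_j ⬝ (η_0, …, η_{m-1})ᵀ`). -/
def digNet (b : ℕ) {m s : ℕ} (C : Fin s → ℕ → Fin m → ZMod b) (h : ℕ) :
    Fin s → ℕ → ZMod b :=
  fun j i => ∑ r : Fin m, ((bdig b h r : ℕ) : ZMod b) * C j i r

/-- the product `k⃗ C` of the (finitely supported) `b`-adic digit vector
`k⃗ = (κ_0, κ_1, …)` of `k` with the matrix `C : ℕ → Fin m → ZMod b`. -/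
def digitVecMul (b : ℕ) {m : ℕ} (k : ℕ) (C : ℕ → Fin m → ZMod b) : Fin m → ZMod b :=
  fun r => ∑ i ∈ Finset.range k, ((bdig b k i : ℕ) : ZMod b) * C i r

/-- the dual net `𝒫^⊥ = {𝐤 ∈ ℕ^s : k⃗_1 C_1 ⊕ ⋯ ⊕ k⃗_s C_s = 0 ∈ ℤ_b^m}` of the digital
net with generating matrices `C j`. -/
def dualNet (b : ℕ) {m s : ℕ} (C : Fin s → ℕ → Fin m → ZMod b) : Set (Fin s → ℕ) :=
  {k | ∑ j, digitVecMul b (k j) (C j) = 0}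

/-- the sum-of-digits function `δ : ℕ → ℤ_b`, `δ(k) = ∑_i κ_i mod b`. -/
def ddelta (b k : ℕ) : ZMod b := ∑ i ∈ Finset.range k, ((bdig b k i : ℕ) : ZMod b)

/-- `δ(𝐤) = ∑_{j} δ(k_j) mod b` for a vector `𝐤 ∈ ℕ^s`. -/
def ddeltaV (b : ℕ) {s : ℕ} (k : Fin s → ℕ) : ZMod b := ∑ j, ddelta b (k j)

/-- the coefficient `t_l` in the expansion `q(x)/p(x) = ∑_{l ≥ 1} t_l x^{-l}` in the field
of formal Laurent series `ℤ_b((x⁻¹))`: substituting `x = X⁻¹` and multiplying numerator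
and denominator by `X^n` (`n = deg p`) turns `q(x)/p(x)` into the rational function
`reflect n q / reflect n p` of `X`, whose Laurent-series expansion at `X = 0` has
`t_l` as the coefficient of `X^l`. -/
def laurentCoeff (b : ℕ) [Fact b.Prime] (n : ℕ) (p q : Polynomial (ZMod b)) (l : ℕ) :
    ZMod b :=
  ((RatFunc.liftAlgHom (Algebra.ofId (Polynomial (ZMod b)) (LaurentSeries (ZMod b)))
      (nonZeroDivisors_le_comap_nonZeroDivisors_of_injective _
        (Polynomial.algebraMap_hahnSeries_injective ℤ)))
      (algebraMap (Polynomial (ZMod b)) (RatFunc (ZMod b)) (q.reflect n) /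
        algebraMap (Polynomial (ZMod b)) (RatFunc (ZMod b)) (p.reflect n))).coeff (l : ℤ)

/-- the generating matrix `C_j = (c^{(j)}_{l,r})` of the higher order polynomial lattice
point set: `c^{(j)}_{l,r} = t^{(j)}_{l+r-1}` for `l ≤ n`, and `0` otherwise (rows indexed
by `i = l - 1 : ℕ`, columns by `r - 1 : Fin m`). -/
def hoplMatrix (b : ℕ) [Fact b.Prime] (n m : ℕ) (p q : Polynomial (ZMod b)) :
    ℕ → Fin m → ZMod b :=
  fun i r => if i + 1 ≤ n then laurentCoeff b n p q (i + 1 + (r : ℕ)) else 0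

/-- the truncated polynomial `tr_n(k)(x) = κ_0 + κ_1 x + ⋯ + κ_{n-1} x^{n-1}` associated
with `k = κ_0 + κ_1 b + ⋯`. -/
def trPoly (b n k : ℕ) : Polynomial (ZMod b) :=
  ∑ i ∈ Finset.range n, Polynomial.C ((bdig b k i : ℕ) : ZMod b) * Polynomial.X ^ i

/-! ### Auxiliary lemmas -/

section Aux

open Polynomial PowerSeries

private lemma bdig_eq_zero_of_le {b : ℕ} (hb : 2 ≤ b) {k i : ℕ} (h : k ≤ i) :
    bdig b k i = 0 := by
  have h1 : k < 2 ^ i := lt_of_le_of_lt h (Nat.lt_two_pow_self)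
  have h2 : (2 : ℕ) ^ i ≤ b ^ i := Nat.pow_le_pow_left hb i
  simp [bdig, Nat.div_eq_of_lt (lt_of_lt_of_le h1 h2)]

private lemma trPoly_coeff (b n k i : ℕ) :
    (trPoly b n k).coeff i = if i < n then ((bdig b k i : ℕ) : ZMod b) else 0 := by
  simp only [trPoly, Polynomial.finset_sum_coeff, Polynomial.coeff_C_mul,
    Polynomial.coeff_X_pow, mul_ite, mul_one, mul_zero]
  rw [Finset.sum_ite_eq (Finset.range n) i fun j => ((bdig b k j : ℕ) : ZMod b)]
  simp [Finset.mem_range]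

private lemma reflect_finset_sum {R : Type*} [Semiring R] {ι : Type*} (t : Finset ι)
    (N : ℕ) (f : ι → Polynomial R) :
    Polynomial.reflect N (∑ i ∈ t, f i) = ∑ i ∈ t, Polynomial.reflect N (f i) := by
  classical
  induction t using Finset.induction_on with
  | empty => simp
  | insert a s h ih =>
      rw [Finset.sum_insert h, Finset.sum_insert h, Polynomial.reflect_add, ih]

private lemma natDegree_le_pred {K : Type*} [Semiring K] {f : Polynomial K} {n : ℕ}
    (h : f.degree < (n : ℕ)) : f.natDegree ≤ n - 1 := by
  rw [Polynomial.natDegree_le_iff_coeff_eq_zero]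
  intro N hN
  exact (Polynomial.degree_lt_iff_coeff_zero f n).mp h N (by omega)

private lemma trPoly_degree_lt (b n k : ℕ) : (trPoly b n k).degree < (n : ℕ) := by
  rw [Polynomial.degree_lt_iff_coeff_zero]
  intro i hi
  rw [trPoly_coeff]
  simp [Nat.not_lt.mpr hi]

private lemma laurentCoeff_eq (b : ℕ) [Fact b.Prime] (n : ℕ) (p q : Polynomial (ZMod b))
    (hp : (Polynomial.reflect n p).coeff 0 ≠ 0) (l : ℕ) :
    laurentCoeff b n p q l =
      PowerSeries.coeff l
        ((Polynomial.reflect n q : PowerSeries (ZMod b)) *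
          (Polynomial.reflect n p : PowerSeries (ZMod b))⁻¹) := by
  set K := ZMod b
  set Q := Polynomial.reflect n q with hQ
  set P := Polynomial.reflect n p with hP
  have hP0 : PowerSeries.constantCoeff (P : PowerSeries K) ≠ 0 := by
    rwa [← PowerSeries.coeff_zero_eq_constantCoeff_apply, Polynomial.coeff_coe]
  have hmul : (P : PowerSeries K) * (P : PowerSeries K)⁻¹ = 1 :=
    PowerSeries.mul_inv_cancel _ hP0
  have hPL : (((P : PowerSeries K) : LaurentSeries K)) ≠ 0 := by
    intro h
    apply hP0
    have := HahnSeries.ofPowerSeries_injective (Γ := ℤ) (R := K)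
      (a₁ := (P : PowerSeries K)) (a₂ := 0) (by simpa using h)
    simp [this]
  have key : (((Q : PowerSeries K) * (P : PowerSeries K)⁻¹ : PowerSeries K) : LaurentSeries K)
      = ((Q : PowerSeries K) : LaurentSeries K) / ((P : PowerSeries K) : LaurentSeries K) := by
    rw [eq_div_iff hPL, ← PowerSeries.coe_mul, mul_assoc, mul_comm ((P : PowerSeries K))⁻¹,
      hmul, mul_one]
  have hcoe : ∀ f : Polynomial K,
      (Algebra.ofId (Polynomial K) (LaurentSeries K)) f
        = ((f : PowerSeries K) : LaurentSeries K) := by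
    intro f
    rfl
  rw [laurentCoeff, RatFunc.liftAlgHom_apply_div, hcoe, hcoe, ← key, HahnSeries.ofPowerSeries_apply_coeff]

private lemma digitVecMul_hopl (b : ℕ) [Fact b.Prime] {m : ℕ} (n : ℕ)
    (p q : Polynomial (ZMod b)) (hp : (Polynomial.reflect n p).coeff 0 ≠ 0)
    (k : ℕ) (r : Fin m) :
    digitVecMul b k (hoplMatrix b n m p q) r =
      PowerSeries.coeff (n + 1 + (r : ℕ))
        ((Polynomial.reflect n (trPoly b n k) : PowerSeries (ZMod b)) *
          ((Polynomial.reflect n q : PowerSeries (ZMod b)) *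
            (Polynomial.reflect n p : PowerSeries (ZMod b))⁻¹)) := by
  classical
  set K := ZMod b
  have hb2 : 2 ≤ b := (Fact.out : b.Prime).two_le
  set S : PowerSeries K := (Polynomial.reflect n q : PowerSeries K) *
    (Polynomial.reflect n p : PowerSeries K)⁻¹ with hS
  set κ : ℕ → K := fun i => ((bdig b k i : ℕ) : K) with hκ
  -- left side as a sum over `range n`
  have hstep : ∀ i, ((bdig b k i : ℕ) : K) * hoplMatrix b n m p q i r
      = κ i * (if i + 1 ≤ n then PowerSeries.coeff (i + 1 + (r : ℕ)) S else 0) := by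
    intro i
    rw [hoplMatrix]
    split_ifs with h
    · rw [laurentCoeff_eq b n p q hp]
    · rfl
  have hL : digitVecMul b k (hoplMatrix b n m p q) r
      = ∑ i ∈ Finset.range n, κ i * PowerSeries.coeff (i + 1 + (r : ℕ)) S := by
    have e1 : digitVecMul b k (hoplMatrix b n m p q) r
        = ∑ i ∈ Finset.range (max k n),
            κ i * (if i + 1 ≤ n then PowerSeries.coeff (i + 1 + (r : ℕ)) S else 0) := by
      rw [digitVecMul]
      simp only [hstep]
      refine Finset.sum_subset (Finset.range_subset_range.mpr (le_max_left _ _)) fun i _ hi => ?_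
      rw [Finset.mem_range, Nat.not_lt] at hi
      simp [hκ, bdig_eq_zero_of_le hb2 hi]
    have hz : ∀ i ∈ Finset.range (max k n), i ∉ Finset.range n →
        κ i * (if i + 1 ≤ n then PowerSeries.coeff (i + 1 + (r : ℕ)) S else 0) = 0 := by
      intro i _ hi
      rw [Finset.mem_range, Nat.not_lt] at hi
      rw [if_neg (by omega), mul_zero]
    rw [e1, ← Finset.sum_subset (Finset.range_subset_range.mpr (le_max_right k n)) hz]
    refine Finset.sum_congr rfl fun i hi => ?_
    rw [Finset.mem_range] at hi
    rw [if_pos (by omega)]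
  rw [hL]
  -- right side
  have hT : Polynomial.reflect n (trPoly b n k)
      = ∑ i ∈ Finset.range n, Polynomial.C (κ i) * Polynomial.X ^ (n - i) := by
    rw [trPoly, reflect_finset_sum]
    refine Finset.sum_congr rfl fun i hi => ?_
    rw [Finset.mem_range] at hi
    rw [Polynomial.reflect_C_mul_X_pow, Polynomial.revAt_le (le_of_lt hi)]
  have hTc : (Polynomial.reflect n (trPoly b n k) : PowerSeries K)
      = ∑ i ∈ Finset.range n, PowerSeries.C (κ i) * PowerSeries.X ^ (n - i) := by
    rw [hT, ← Polynomial.coeToPowerSeries.ringHom_apply, map_sum]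
    refine Finset.sum_congr rfl fun i _ => ?_
    simp [Polynomial.coeToPowerSeries.ringHom_apply, Polynomial.coe_mul, Polynomial.coe_C,
      Polynomial.coe_pow, Polynomial.coe_X]
  rw [hTc, Finset.sum_mul, map_sum]
  refine Finset.sum_congr rfl fun i hi => ?_
  rw [Finset.mem_range] at hi
  rw [mul_assoc, PowerSeries.coeff_C_mul]
  congr 1
  have : n + 1 + (r : ℕ) = (i + 1 + (r : ℕ)) + (n - i) := by omega
  rw [this, PowerSeries.coeff_X_pow_mul]

end Aux

/-- for a prime `b`, `1 ≤ m ≤ n`, `p` of degree `n` and `q_j` of degree `< n`,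
the dual net of the higher order polynomial lattice point set `𝒫(p,𝐪)` is
`𝒫^⊥(p,𝐪) = {𝐤 ∈ ℕ^s : deg((tr_n(k_1)q_1 + ⋯ + tr_n(k_s)q_s) mod p) < n - m}`
(equivalently, `tr_n(k_1)q_1 + ⋯ + tr_n(k_s)q_s ≡ a (mod p)` for some `a` with
`deg(a) < n - m`). -/
theorem dualNet_hopl (b : ℕ) [Fact b.Prime] (s m n : ℕ) (hs : 1 ≤ s) (hm : 1 ≤ m)
    (hmn : m ≤ n) (p : Polynomial (ZMod b)) (hp : p.degree = (n : ℕ))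
    (q : Fin s → Polynomial (ZMod b)) (hq : ∀ j, (q j).degree < (n : ℕ)) :
    dualNet b (fun j => hoplMatrix b n m p (q j)) =
      {k : Fin s → ℕ | ((∑ j, trPoly b n (k j) * q j) % p).degree < ((n - m : ℕ) : ℕ)} := by
  classical
  have hb2 : 2 ≤ b := (Fact.out : b.Prime).two_le
  have hn1 : 1 ≤ n := hm.trans hmn
  have hpne : p ≠ 0 := fun h => by simp [h] at hp
  have hpnat : p.natDegree = n := Polynomial.natDegree_eq_of_degree_eq_some hp
  have hP0 : (Polynomial.reflect n p).coeff 0 ≠ 0 := by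
    rw [Polynomial.coeff_reflect, Polynomial.revAt_zero, ← hpnat]
    exact fun h => hpne (Polynomial.leadingCoeff_eq_zero.mp h)
  have hP0' : PowerSeries.constantCoeff
      ((Polynomial.reflect n p : PowerSeries (ZMod b))) ≠ 0 := by
    rwa [← PowerSeries.coeff_zero_eq_constantCoeff_apply, Polynomial.coeff_coe]
  ext k
  simp only [dualNet, Set.mem_setOf_eq, funext_iff, Finset.sum_apply, Pi.zero_apply]
  set F : Polynomial (ZMod b) := ∑ j, trPoly b n (k j) * q j with hFdef
  set A : Polynomial (ZMod b) := F / p with hAdef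
  set R : Polynomial (ZMod b) := F % p with hRdef
  have hF : p * A + R = F := EuclideanDomain.div_add_mod F p
  have hRdeg : R.degree < (n : ℕ) := by
    have h0 : R.degree < p.degree := EuclideanDomain.mod_lt F hpne
    rwa [hp] at h0
  have htrnd : ∀ j, (trPoly b n (k j)).natDegree ≤ n - 1 :=
    fun j => natDegree_le_pred (trPoly_degree_lt b n (k j))
  have hqnd : ∀ j, (q j).natDegree ≤ n - 1 := fun j => natDegree_le_pred (hq j)
  have hFnd : F.natDegree ≤ (n - 1) + (n - 1) :=
    Polynomial.natDegree_sum_le_of_forall_le _ _ fun j _ =>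
      Polynomial.natDegree_mul_le.trans (add_le_add (htrnd j) (hqnd j))
  have hRnd : R.natDegree ≤ n := (natDegree_le_pred hRdeg).trans (Nat.sub_le n 1)
  have hAnd : A.natDegree ≤ n := by
    by_cases hA : A = 0
    · simp [hA]
    · have h1 : (p * A).natDegree = n + A.natDegree := by
        rw [Polynomial.natDegree_mul hpne hA, hpnat]
      have h2 : p * A = F - R := by rw [← hF]; ring
      have h3 : (p * A).natDegree ≤ (n - 1) + (n - 1) := by
        rw [h2]
        exact (Polynomial.natDegree_sub_le F R).trans
          (max_le hFnd ((natDegree_le_pred hRdeg).trans (by omega)))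
      omega
  have hreflF : Polynomial.reflect (n + n) F
      = ∑ j, Polynomial.reflect n (trPoly b n (k j)) * Polynomial.reflect n (q j) := by
    rw [hFdef, reflect_finset_sum]
    exact Finset.sum_congr rfl fun j _ =>
      Polynomial.reflect_mul _ _ ((htrnd j).trans (by omega)) ((hqnd j).trans (by omega))
  have hreflF2 : Polynomial.reflect (n + n) F
      = Polynomial.reflect n p * Polynomial.reflect n A
        + Polynomial.reflect n R * Polynomial.X ^ n := by
    conv_lhs => rw [← hF]
    rw [Polynomial.reflect_add, Polynomial.reflect_mul p A (le_of_eq hpnat) hAnd]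
    congr 1
    conv_lhs => rw [← mul_one R]
    rw [Polynomial.reflect_mul R 1 hRnd
      (by simp : (1 : Polynomial (ZMod b)).natDegree ≤ n), Polynomial.reflect_one]
  set u : PowerSeries (ZMod b) := (Polynomial.reflect n p : PowerSeries (ZMod b))⁻¹ with hu
  have hPu : (Polynomial.reflect n p : PowerSeries (ZMod b)) * u = 1 :=
    PowerSeries.mul_inv_cancel _ hP0'
  set Z : PowerSeries (ZMod b) := (Polynomial.reflect n R : PowerSeries (ZMod b)) * u with hZ
  have hZ0 : PowerSeries.coeff 0 Z = 0 := by
    rw [hZ, PowerSeries.coeff_zero_eq_constantCoeff_apply, map_mul,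
      ← PowerSeries.coeff_zero_eq_constantCoeff_apply, Polynomial.coeff_coe,
      Polynomial.coeff_reflect, Polynomial.revAt_zero,
      (Polynomial.degree_lt_iff_coeff_zero R n).mp hRdeg n le_rfl, zero_mul]
  have step1 : (∀ r : Fin m, (∑ j, digitVecMul b (k j) (hoplMatrix b n m p (q j)) r) = 0)
      ↔ ∀ r : Fin m, PowerSeries.coeff (1 + (r : ℕ)) Z = 0 := by
    refine forall_congr' fun r => ?_
    have e1 : (∑ j, digitVecMul b (k j) (hoplMatrix b n m p (q j)) r)
        = PowerSeries.coeff (n + 1 + (r : ℕ))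
            ((Polynomial.reflect (n + n) F : PowerSeries (ZMod b)) * u) := by
      have := fun j : Fin s => digitVecMul_hopl b n p (q j) hP0 (k j) r
      simp only [this]
      rw [← map_sum]
      congr 1
      rw [hreflF]
      have hsum : ((∑ j, Polynomial.reflect n (trPoly b n (k j)) * Polynomial.reflect n (q j) :
            Polynomial (ZMod b)) : PowerSeries (ZMod b))
          = ∑ j, ((Polynomial.reflect n (trPoly b n (k j)) * Polynomial.reflect n (q j) :
            Polynomial (ZMod b)) : PowerSeries (ZMod b)) := by
        rw [← Polynomial.coeToPowerSeries.ringHom_apply, map_sum]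
        simp only [Polynomial.coeToPowerSeries.ringHom_apply]
      rw [hsum, Finset.sum_mul]
      refine Finset.sum_congr rfl fun j _ => ?_
      rw [Polynomial.coe_mul, mul_assoc, hu]
    have e2 : ((Polynomial.reflect (n + n) F : PowerSeries (ZMod b))) * u
        = (Polynomial.reflect n A : PowerSeries (ZMod b)) + PowerSeries.X ^ n * Z := by
      rw [hreflF2, Polynomial.coe_add, Polynomial.coe_mul, Polynomial.coe_mul,
        Polynomial.coe_pow, Polynomial.coe_X, add_mul]
      have h5 : (Polynomial.reflect n p : PowerSeries (ZMod b))
            * (Polynomial.reflect n A : PowerSeries (ZMod b)) * u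
          = (Polynomial.reflect n A : PowerSeries (ZMod b)) := by
        rw [mul_right_comm, hPu, one_mul]
      rw [h5, hZ]
      ring
    have e3 : PowerSeries.coeff (n + 1 + (r : ℕ))
        ((Polynomial.reflect n A : PowerSeries (ZMod b))) = 0 := by
      rw [Polynomial.coeff_coe, Polynomial.coeff_reflect,
        Polynomial.revAt_eq_self_of_lt (by omega)]
      exact Polynomial.coeff_eq_zero_of_natDegree_lt (by omega)
    have e4 : PowerSeries.coeff (n + 1 + (r : ℕ)) (PowerSeries.X ^ n * Z)
        = PowerSeries.coeff (1 + (r : ℕ)) Z := by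
      have h6 : n + 1 + (r : ℕ) = (1 + (r : ℕ)) + n := by omega
      rw [h6, PowerSeries.coeff_X_pow_mul]
    rw [e1, e2, map_add, e3, e4, zero_add]
  have step2 : (∀ r : Fin m, PowerSeries.coeff (1 + (r : ℕ)) Z = 0)
      ↔ R.degree < ((n - m : ℕ) : WithBot ℕ) := by
    constructor
    · intro h
      rw [Polynomial.degree_lt_iff_coeff_zero]
      intro i hi
      by_cases hin : n ≤ i
      · exact (Polynomial.degree_lt_iff_coeff_zero R n).mp hRdeg i hin
      · have h1 : (PowerSeries.X : PowerSeries (ZMod b)) ^ (m + 1) ∣ Z := by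
          rw [PowerSeries.X_pow_dvd_iff]
          intro l hl
          rcases Nat.eq_zero_or_pos l with rfl | hl0
          · exact hZ0
          · have h7 := h ⟨l - 1, by omega⟩
            simpa [show 1 + (l - 1) = l by omega] using h7
        have h2 : (Polynomial.reflect n R : PowerSeries (ZMod b))
            = Z * (Polynomial.reflect n p : PowerSeries (ZMod b)) := by
          rw [hZ, mul_assoc, mul_comm u, hPu, mul_one]
        have h3 : (PowerSeries.X : PowerSeries (ZMod b)) ^ (m + 1)
            ∣ (Polynomial.reflect n R : PowerSeries (ZMod b)) := by
          rw [h2]; exact h1.mul_right _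
        rw [PowerSeries.X_pow_dvd_iff] at h3
        have h4 := h3 (n - i) (by omega)
        rwa [Polynomial.coeff_coe, Polynomial.coeff_reflect,
          Polynomial.revAt_le (by omega : n - i ≤ n),
          show n - (n - i) = i by omega] at h4
    · intro h r
      have hdvd : (PowerSeries.X : PowerSeries (ZMod b)) ^ (m + 1)
          ∣ (Polynomial.reflect n R : PowerSeries (ZMod b)) := by
        rw [PowerSeries.X_pow_dvd_iff]
        intro l hl
        rw [Polynomial.coeff_coe, Polynomial.coeff_reflect,
          Polynomial.revAt_le (by omega : l ≤ n)]
        exact (Polynomial.degree_lt_iff_coeff_zero R (n - m)).mp h (n - l) (by omega)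
      have h8 : (PowerSeries.X : PowerSeries (ZMod b)) ^ (m + 1) ∣ Z :=
        hZ ▸ hdvd.mul_right u
      rw [PowerSeries.X_pow_dvd_iff] at h8
      exact h8 (1 + (r : ℕ)) (by have := r.isLt; omega)
  exact step1.trans step2
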